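/- Let α be a nonzero algebraic integer in a cyclotomic field which is a d-number of degree d = [ℚ(α):ℚ], with norm N(α) = ± Π_j p_j^{k_j} (prime factorization). Then the following are equivalent: (a) 0 ≤ k_j < d for every prime p_j, and (b) no rational integer m ≥ 2 divides α in the ring of algebraic integers. -/

import Mathlib

open IntermediateField Polynomial

set_option synthInstance.maxHeartbeats 1000000 in
set_option maxHeartbeats 2000000 in
lemma myext19 {A : IntermediateField ℚ ℂ} (g : A ≃ₐ[ℚ] A) :
    ∃ σ : ℂ ≃+* ℂ, ∀ x : A, σ x = g x := by
  obtain ⟨ι, v, hv⟩ := exists_isTranscendenceBasis' A ℂ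
  haveI : FaithfulSMul (Algebra.adjoin A (Set.range v)) ℂ :=
    (faithfulSMul_iff_algebraMap_injective _ _).2 Subtype.val_injective
  haveI : IsAlgClosure (Algebra.adjoin A (Set.range v)) ℂ :=
    IsAlgClosed.isAlgClosure_of_transcendence_basis v hv
  let e1 : MvPolynomial ι A ≃ₐ[A] Algebra.adjoin A (Set.range v) := hv.1.aevalEquiv
  let e : (Algebra.adjoin A (Set.range v)) ≃+* (Algebra.adjoin A (Set.range v)) :=
    (e1.symm.toRingEquiv.trans (MvPolynomial.mapEquiv ι g.toRingEquiv)).trans e1.toRingEquiv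
  refine ⟨IsAlgClosure.equivOfEquiv ℂ ℂ e, fun x => ?_⟩
  have h1 : (x : ℂ) = algebraMap (Algebra.adjoin A (Set.range v)) ℂ
      (algebraMap A (Algebra.adjoin A (Set.range v)) x) := by
    rw [← IsScalarTower.algebraMap_apply]; rfl
  have h2 : e (algebraMap A (Algebra.adjoin A (Set.range v)) x)
      = algebraMap A (Algebra.adjoin A (Set.range v)) (g x) := by
    have c1 : e1.symm (algebraMap A (Algebra.adjoin A (Set.range v)) x) = MvPolynomial.C x := by
      rw [← e1.commutes x]; simp [MvPolynomial.algebraMap_eq]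
    show e1 (MvPolynomial.mapEquiv ι g.toRingEquiv (e1.symm
        (algebraMap A (Algebra.adjoin A (Set.range v)) x))) = _
    rw [c1]
    have := e1.commutes (g x)
    rw [MvPolynomial.algebraMap_eq] at this
    simpa [MvPolynomial.mapEquiv_apply] using this
  rw [h1, IsAlgClosure.equivOfEquiv_algebraMap, h2, ← IsScalarTower.algebraMap_apply]
  rfl

set_option synthInstance.maxHeartbeats 400000 in
lemma myconj19 (α β : ℂ) (hα : IsIntegral ℤ α) (hβ : aeval β (minpoly ℚ α) = 0) :
    ∃ σ : ℂ ≃+* ℂ, σ α = β := by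
  have hαQ : IsIntegral ℚ α := hα.tower_top
  have hβQ : IsAlgebraic ℚ β := ⟨minpoly ℚ α, minpoly.ne_zero hαQ, hβ⟩
  have hαA : α ∈ algebraicClosure ℚ ℂ := (mem_algebraicClosure_iff).2 hαQ.isAlgebraic
  have hβA : β ∈ algebraicClosure ℚ ℂ := (mem_algebraicClosure_iff).2 hβQ
  set A := algebraicClosure ℚ ℂ with hA
  let α' : A := ⟨α, hαA⟩
  let β' : A := ⟨β, hβA⟩
  have hmp : minpoly ℚ α = minpoly ℚ α' :=
    minpoly.algebraMap_eq (algebraMap A ℂ).injective α'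
  haveI : FaithfulSMul A ℂ :=
    (faithfulSMul_iff_algebraMap_injective _ _).2 (algebraMap A ℂ).injective
  haveI : Algebra.IsAlgebraic ℚ A := algebraicClosure.isAlgebraic ℚ ℂ
  haveI : IsAlgClosure ℚ A := algebraicClosure.isAlgClosure ℚ ℂ
  haveI : Normal ℚ A := IsAlgClosure.normal ℚ A
  have hev : aeval β' (minpoly ℚ α') = 0 := by
    rw [← aeval_algebraMap_eq_zero_iff ℂ, ← hmp]
    exact hβ
  obtain ⟨g, hg⟩ := minpoly.exists_algEquiv_of_root' (Algebra.IsAlgebraic.isAlgebraic α') hev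
  obtain ⟨σ, hσ⟩ := myext19 g
  refine ⟨σ, ?_⟩
  have := hσ α'
  rw [hg] at this
  exact this

lemma myprod19 (α : ℂ) (R : Multiset ℂ) :
    (R.map fun b => α / b).prod = α ^ Multiset.card R / R.prod := by
  induction R using Multiset.induction_on with
  | empty => simp
  | cons b R ih =>
      simp only [Multiset.map_cons, Multiset.prod_cons, ih, Multiset.card_cons]
      rw [div_mul_div_comm, pow_succ, mul_comm (α ^ Multiset.card R) α]


/-- Let `α` be a nonzero cyclotomic d-number of degree `d` with norm `N`
(so `(N : ℚ) = (-1)^d · coeff 0` of its minimal polynomial). Then the exponent of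
every prime in `N` is `< d` iff no rational integer `m ≥ 2` divides `α` in the ring
of algebraic integers. -/
theorem stmt19 (α : ℂ) (hα0 : α ≠ 0) (hαint : IsIntegral ℤ α)
    (n : ℕ) (hn : 1 ≤ n) (ζ : ℂ) (hζ : IsPrimitiveRoot ζ n) (hαmem : α ∈ ℚ⟮ζ⟯)
    (hαd : ∀ σ : ℂ ≃+* ℂ, IsIntegral ℤ (σ α / α))
    (d : ℕ) (hd : d = (minpoly ℚ α).natDegree)
    (N : ℤ) (hN : (N : ℚ) = (-1 : ℚ) ^ d * (minpoly ℚ α).coeff 0) :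
    (∀ p : ℕ, p.Prime → N.natAbs.factorization p < d) ↔
      (∀ m : ℤ, 2 ≤ m → ¬ ∃ γ : ℂ, IsIntegral ℤ γ ∧ α = (m : ℂ) * γ) := by
  have hαQ : IsIntegral ℚ α := hαint.tower_top
  have hd0 : 0 < d := hd ▸ minpoly.natDegree_pos hαQ
  have ha0 : (minpoly ℚ α).coeff 0 ≠ 0 := minpoly.coeff_zero_ne_zero hαQ hα0
  have hαmonic : (minpoly ℚ α).Monic := minpoly.monic hαQ
  have hN0 : N ≠ 0 := by
    intro h
    rw [h, Int.cast_zero] at hN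
    rcases mul_eq_zero.1 hN.symm with h1 | h1
    · exact absurd h1 (pow_ne_zero d (by norm_num))
    · exact ha0 h1
  constructor
  · -- (a) → (b)
    intro hsmall m hm ⟨γ, hγint, hγeq⟩
    have hm0 : (m : ℚ) ≠ 0 := by
      have : m ≠ 0 := by omega
      exact_mod_cast this
    have hmC : (m : ℂ) ≠ 0 := by
      have : m ≠ 0 := by omega
      exact_mod_cast this
    have hγ0 : γ ≠ 0 := by
      intro h; rw [h, mul_zero] at hγeq; exact hα0 hγeq
    have hγQ : IsIntegral ℚ γ := hγint.tower_top
    set q := minpoly ℚ γ with hq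
    -- α is a root of q.scaleRoots m
    have h1 : aeval α (q.scaleRoots (m : ℚ)) = 0 := by
      have := scaleRoots_aeval_eq_zero (A := ℂ) (r := (m : ℚ)) (minpoly.aeval ℚ γ)
      rw [show algebraMap ℚ ℂ (m : ℚ) = (m : ℂ) by push_cast; simp] at this
      rwa [← hγeq] at this
    have hdvd : minpoly ℚ α ∣ q.scaleRoots (m : ℚ) := minpoly.dvd ℚ α h1
    -- γ is a root of (minpoly ℚ α).scaleRoots m⁻¹
    have h2 : aeval γ ((minpoly ℚ α).scaleRoots ((m : ℚ)⁻¹)) = 0 := by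
      have := scaleRoots_aeval_eq_zero (A := ℂ) (r := ((m : ℚ)⁻¹)) (minpoly.aeval ℚ α)
      have e1 : algebraMap ℚ ℂ ((m : ℚ)⁻¹) * α = γ := by
        rw [hγeq]
        rw [map_inv₀]
        rw [show algebraMap ℚ ℂ (m : ℚ) = (m : ℂ) by push_cast; simp]
        field_simp
      rwa [e1] at this
    have hdvd2 : q ∣ (minpoly ℚ α).scaleRoots ((m : ℚ)⁻¹) := minpoly.dvd ℚ γ h2
    have hqmonic : q.Monic := minpoly.monic hγQ
    have hdeg1 : (minpoly ℚ α).natDegree ≤ q.natDegree := by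
      have := Polynomial.natDegree_le_of_dvd hdvd
        ((monic_scaleRoots_iff (m : ℚ)).2 hqmonic).ne_zero
      rwa [natDegree_scaleRoots] at this
    have hdeg2 : q.natDegree ≤ (minpoly ℚ α).natDegree := by
      have := Polynomial.natDegree_le_of_dvd hdvd2
        ((monic_scaleRoots_iff ((m : ℚ)⁻¹)).2 hαmonic).ne_zero
      rwa [natDegree_scaleRoots] at this
    have hdeg : q.natDegree = d := hd ▸ le_antisymm hdeg2 hdeg1
    -- minpoly ℚ α = q.scaleRoots m
    have heq : q.scaleRoots (m : ℚ) = minpoly ℚ α := by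
      apply Polynomial.eq_of_monic_of_dvd_of_natDegree_le hαmonic
        ((monic_scaleRoots_iff (m : ℚ)).2 hqmonic) hdvd
      rw [natDegree_scaleRoots, hdeg, hd]
    -- integer coefficients of q
    have hqint : q = (minpoly ℤ γ).map (algebraMap ℤ ℚ) :=
      minpoly.isIntegrallyClosed_eq_field_fractions' ℚ hγint
    set c : ℤ := (minpoly ℤ γ).coeff 0 with hc
    have hc0 : q.coeff 0 = (c : ℚ) := by rw [hqint, coeff_map]; rfl
    -- N in terms of c and m
    have hNval : (N : ℚ) = ((-1) ^ d * c * m ^ d : ℤ) := by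
      rw [hN, ← heq, coeff_scaleRoots, Nat.sub_zero, hdeg, hc0]
      push_cast
      ring
    have hNeq : N = (-1) ^ d * c * m ^ d := by exact_mod_cast hNval
    have hcne : c ≠ 0 := by
      intro h; rw [h] at hNeq; simp at hNeq; exact hN0 hNeq
    -- pick a prime dividing m
    set p := m.natAbs.minFac with hp
    have hm2 : 2 ≤ m.natAbs := by omega
    have hpp : p.Prime := Nat.minFac_prime (by omega)
    have hlt := hsmall p hpp
    -- compute factorization
    have hNabs : N.natAbs = c.natAbs * m.natAbs ^ d := by
      rw [hNeq]
      rw [Int.natAbs_mul, Int.natAbs_mul, Int.natAbs_pow, Int.natAbs_pow]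
      simp [Int.natAbs_pow]
    have hcabs : c.natAbs ≠ 0 := Int.natAbs_ne_zero.2 hcne
    have hmabs : m.natAbs ^ d ≠ 0 := pow_ne_zero _ (by omega)
    have hfac : N.natAbs.factorization p =
        c.natAbs.factorization p + d * m.natAbs.factorization p := by
      rw [hNabs, Nat.factorization_mul hcabs hmabs, Nat.factorization_pow]
      simp [mul_comm]
    have hppos : 1 ≤ m.natAbs.factorization p :=
      (Nat.Prime.factorization_pos_of_dvd hpp (by omega) (Nat.minFac_dvd _))
    rw [hfac] at hlt
    nlinarith [Nat.zero_le (c.natAbs.factorization p)]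
  · -- (b) → (a)
    intro hnodiv p hpp
    by_contra hge
    push_neg at hge
    -- p^d divides N
    have hpd : (p : ℤ) ^ d ∣ N := by
      have h1 : p ^ d ∣ N.natAbs :=
        (Nat.Prime.pow_dvd_iff_le_factorization hpp (Int.natAbs_ne_zero.2 hN0)).2 hge
      have h2 : ((p : ℤ)) ^ d ∣ (N.natAbs : ℤ) := by exact_mod_cast h1
      exact h2.trans (Int.natAbs_dvd.2 dvd_rfl)
    obtain ⟨c, hcN⟩ := hpd
    have hcne : c ≠ 0 := by rintro rfl; rw [mul_zero] at hcN; exact hN0 hcN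
    have hpC : ((p : ℂ)) ≠ 0 := by exact_mod_cast hpp.ne_zero
    have hcC : ((c : ℂ)) ≠ 0 := by exact_mod_cast hcne
    -- roots of the minimal polynomial over ℂ
    set P := (minpoly ℚ α).map (algebraMap ℚ ℂ) with hP
    have hPmonic : P.Monic := hαmonic.map _
    have hPsplits : P.Splits := IsAlgClosed.splits _
    set R := P.roots with hR
    have hcard : Multiset.card R = d := by
      rw [hR, splits_iff_card_roots.1 hPsplits, hP, natDegree_map, hd]
    have hprodR : R.prod = (N : ℂ) := by
      have h3 := hPsplits.coeff_zero_eq_prod_roots_of_monic hPmonic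
      have h4 : P.natDegree = d := by rw [hP, natDegree_map, hd]
      have h5 : P.coeff 0 = algebraMap ℚ ℂ ((minpoly ℚ α).coeff 0) := by
        rw [hP, coeff_map]
      have h6 : ((N : ℚ) : ℂ) = ((-1 : ℚ) ^ d * (minpoly ℚ α).coeff 0 : ℚ) := by
        exact_mod_cast congrArg (fun x : ℚ => (x : ℂ)) hN
      push_cast at h6
      rw [h4, h5] at h3
      have h7 : algebraMap ℚ ℂ ((minpoly ℚ α).coeff 0) = (((minpoly ℚ α).coeff 0 : ℚ) : ℂ) := rfl
      rw [h7] at h3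
      have : (N : ℂ) = (-1 : ℂ) ^ d * (((minpoly ℚ α).coeff 0 : ℚ) : ℂ) := h6
      rw [this, h3]
      rw [← mul_assoc]
      rw [← mul_pow]
      simp
      rfl
    have hNC : ((N : ℂ)) ≠ 0 := by exact_mod_cast hN0
    -- each α / β is an algebraic integer
    have hint : ∀ β ∈ R, IsIntegral ℤ (α / β) := by
      intro β hβ
      have hroot : aeval β (minpoly ℚ α) = 0 := by
        have := (mem_roots_iff_aeval_eq_zero hPmonic.ne_zero).1 hβ
        rwa [hP, aeval_map_algebraMap] at this
      obtain ⟨σ, hσ⟩ := myconj19 α β hαint hroot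
      have h8 : α / β = σ (σ.symm α / α) := by
        rw [map_div₀, RingEquiv.apply_symm_apply, hσ]
      rw [h8]
      exact (hαd σ.symm).map σ.toRingHom.toIntAlgHom
    have hprodint : IsIntegral ℤ ((R.map fun b => α / b).prod) := by
      apply IsIntegral.multiset_prod
      intro x hx
      obtain ⟨β, hβ, rfl⟩ := Multiset.mem_map.1 hx
      exact hint β hβ
    have hkey : IsIntegral ℤ (α ^ d / (N : ℂ)) := by
      have := myprod19 α R
      rw [hcard, hprodR] at this
      rwa [this] at hprodint
    -- γ := α / p is an algebraic integer
    have hγint : IsIntegral ℤ (α / (p : ℂ)) := by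
      apply IsIntegral.of_pow hd0
      have hpow : (α / (p : ℂ)) ^ d = (α ^ d / (N : ℂ)) * (c : ℂ) := by
        have hNc : (N : ℂ) = (p : ℂ) ^ d * (c : ℂ) := by exact_mod_cast congrArg (fun x : ℤ => (x : ℂ)) hcN
        rw [hNc]
        field_simp
        rw [← mul_pow, div_mul_cancel₀ α hpC]
      rw [hpow]
      refine hkey.mul ?_
      have : ((c : ℂ)) = algebraMap ℤ ℂ c := by simp
      rw [this]
      exact isIntegral_algebraMap
    -- contradiction with (b)
    refine hnodiv (p : ℤ) (by exact_mod_cast hpp.two_le) ⟨α / (p : ℂ), hγint, ?_⟩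
    push_cast
    field_simp
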